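/- Let q = p^m with p prime and let 0 ≤ s < m. Let C_1,…,C_l ⊆ F_q^n be linear codes over F_q and let A be a nonsingular l×l matrix over F_q such that A·(A^{(p^{m-s})})^T = diag(λ_1,…,λ_l) with λ_1,…,λ_l all nonzero elements of F_q. Then the s-Galois hull of the matrix-product code C = [C_1,…,C_l]A satisfies Hull_s(C) = [Hull_s(C_1),…,Hull_s(C_l)]A. -/
import Mathlib


open Finset Matrix

noncomputable section

/-- The Hamming weight of a vector: the number of nonzero coordinates. -/
def hwt {G : Type*} [Zero G] {κ : Type*} (x : κ → G) : ℕ := Set.ncard {i | x i ≠ 0}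

/-- The linear code `C` has minimum Hamming weight `d`. -/
def minHWt {F : Type*} [Field F] {κ : Type*} (C : Submodule F (κ → F)) (d : ℕ) : Prop :=
  (∃ c ∈ C, c ≠ 0 ∧ hwt c = d) ∧ ∀ c ∈ C, c ≠ 0 → d ≤ hwt c

/-- The minimum Hamming weight (minimum distance) of a linear code. -/
def minDist {F : Type*} [Field F] {κ : Type*} (C : Submodule F (κ → F)) : ℕ :=
  sInf (hwt '' {c | c ∈ C ∧ c ≠ 0})

/-- The Euclidean dual of a linear code. -/
def euclDual {F : Type*} [Field F] {ι : Type*} [Fintype ι] (C : Submodule F (ι → F)) :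
    Submodule F (ι → F) where
  carrier := {x | ∀ c ∈ C, ∑ i, c i * x i = 0}
  add_mem' := by
    intro a b ha hb c hc
    simp only [Set.mem_setOf_eq] at *
    simp [Pi.add_apply, mul_add, Finset.sum_add_distrib, ha c hc, hb c hc]
  zero_mem' := by intro c hc; simp
  smul_mem' := by
    intro r a ha c hc
    simp only [Set.mem_setOf_eq] at *
    simp [Pi.smul_apply, smul_eq_mul, mul_left_comm, ← Finset.mul_sum, ha c hc]

/-- The `s`-Galois dual of a linear code over a field of characteristic `p`:
`{x | ∀ c ∈ C, ∑ i, c i * (x i)^(p^s) = 0}`. -/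
def sGaloisDual {F : Type*} [Field F] {ι : Type*} [Fintype ι]
    (p s : ℕ) [Fact p.Prime] [CharP F p] (C : Submodule F (ι → F)) :
    Submodule F (ι → F) where
  carrier := {x | ∀ c ∈ C, ∑ i, c i * x i ^ p ^ s = 0}
  add_mem' := by
    intro a b ha hb c hc
    simp only [Set.mem_setOf_eq] at *
    have h : ∀ i, ((a + b) i) ^ p ^ s = a i ^ p ^ s + b i ^ p ^ s := fun i => by
      simpa using add_pow_char_pow (a i) (b i) p s
    calc ∑ i, c i * ((a + b) i) ^ p ^ s
        = ∑ i, (c i * a i ^ p ^ s + c i * b i ^ p ^ s) :=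
          Finset.sum_congr rfl fun i _ => by rw [h i, mul_add]
      _ = 0 := by rw [Finset.sum_add_distrib, ha c hc, hb c hc, add_zero]
  zero_mem' := by
    intro c hc
    have hps : p ^ s ≠ 0 := pow_ne_zero _ (Nat.Prime.ne_zero Fact.out)
    simp [zero_pow hps]
  smul_mem' := by
    intro r a ha c hc
    simp only [Set.mem_setOf_eq] at *
    have h : ∀ i, ((r • a) i) ^ p ^ s = r ^ p ^ s * a i ^ p ^ s := fun i => by
      simp [mul_pow]
    calc ∑ i, c i * ((r • a) i) ^ p ^ s
        = ∑ i, r ^ p ^ s * (c i * a i ^ p ^ s) :=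
          Finset.sum_congr rfl fun i _ => by rw [h i]; ring
      _ = 0 := by rw [← Finset.mul_sum, ha c hc, mul_zero]

/-- The `s`-Galois hull of a linear code: `Hull_s(C) = C ∩ C^{⊥_s}`. -/
def sGaloisHull {F : Type*} [Field F] {ι : Type*} [Fintype ι]
    (p s : ℕ) [Fact p.Prime] [CharP F p] (C : Submodule F (ι → F)) :
    Submodule F (ι → F) :=
  C ⊓ sGaloisDual p s C

/-- The matrix-product code `[C_1, …, C_l] A ⊆ F^{t·n}`: codewords are indexed by
`Fin t × Fin n`, with block `j` equal to `∑ u, A u j • c u` for codewords `c u ∈ C u`. -/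
def matrixProductCode {F : Type*} [Field F] {n l t : ℕ}
    (C : Fin l → Submodule F (Fin n → F)) (A : Matrix (Fin l) (Fin t) F) :
    Submodule F (Fin t × Fin n → F) where
  carrier := {x | ∃ c : Fin l → Fin n → F, (∀ u, c u ∈ C u) ∧
      ∀ j i, x (j, i) = ∑ u, A u j * c u i}
  add_mem' := by
    rintro x y ⟨c, hc, hx⟩ ⟨c', hc', hy⟩
    exact ⟨c + c', fun u => (C u).add_mem (hc u) (hc' u), fun j i => by
      simp [hx j i, hy j i, mul_add, Finset.sum_add_distrib]⟩
  zero_mem' := ⟨0, fun u => (C u).zero_mem, fun j i => by simp⟩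
  smul_mem' := by
    rintro r x ⟨c, hc, hx⟩
    refine ⟨r • c, fun u => (C u).smul_mem r (hc u), fun j i => ?_⟩
    simp only [Pi.smul_apply, smul_eq_mul, hx j i, Finset.mul_sum]
    exact Finset.sum_congr rfl fun u _ => by ring

/-- `UA A i` : the code in `F^t` spanned by the first `i` rows of the matrix `A`. -/
def UA {F : Type*} [Field F] {l t : ℕ} (A : Matrix (Fin l) (Fin t) F) (i : ℕ) :
    Submodule F (Fin t → F) :=
  Submodule.span F ((fun u : Fin l => A u) '' {u | (u : ℕ) < i})

/-- The Gabidulin code of dimension `k` associated to `g : Fin m → K`, over a field `K`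
containing a subfield with `q` elements: the row span of the matrix `(g j ^ q ^ i)`. -/
def gabidulin {K : Type*} [Field K] (q : ℕ) {m : ℕ} (k : ℕ) (g : Fin m → K) :
    Submodule K (Fin m → K) :=
  Submodule.span K (Set.range fun i : Fin k => fun j => g j ^ q ^ (i : ℕ))


section Aux

variable {F : Type*} [Field F] {n l : ℕ}

lemma mem_matrixProductCode {t : ℕ} (C : Fin l → Submodule F (Fin n → F))
    (A : Matrix (Fin l) (Fin t) F) (x : Fin t × Fin n → F) :
    x ∈ matrixProductCode C A ↔ ∃ c : Fin l → Fin n → F, (∀ u, c u ∈ C u) ∧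
      ∀ j i, x (j, i) = ∑ u, A u j * c u i := Iff.rfl

lemma mem_sGaloisDual {ι : Type*} [Fintype ι] (p s : ℕ) [Fact p.Prime] [CharP F p]
    (C : Submodule F (ι → F)) (x : ι → F) :
    x ∈ sGaloisDual p s C ↔ ∀ c ∈ C, ∑ i, c i * x i ^ p ^ s = 0 := Iff.rfl

lemma repr_eq (C : Fin l → Submodule F (Fin n → F)) (A : Matrix (Fin l) (Fin l) F)
    (hA : IsUnit A) {x : Fin l × Fin n → F} {c : Fin l → Fin n → F}
    (hx : ∀ j i, x (j, i) = ∑ u, A u j * c u i) (u : Fin l) :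
    (fun i => ∑ j, A⁻¹ j u * x (j, i)) = c u := by
  have hdet : IsUnit A.det := (Matrix.isUnit_iff_isUnit_det A).mp hA
  funext i
  calc ∑ j, A⁻¹ j u * x (j, i) = ∑ j, ∑ v, A⁻¹ j u * (A v j * c v i) := by
        simp_rw [hx, Finset.mul_sum]
    _ = ∑ v, (∑ j, A v j * A⁻¹ j u) * c v i := by
        rw [Finset.sum_comm]
        simp_rw [Finset.sum_mul]
        exact Finset.sum_congr rfl fun v _ => Finset.sum_congr rfl fun j _ => by ring
    _ = ∑ v, (if v = u then 1 else 0) * c v i := by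
        refine Finset.sum_congr rfl fun v _ => ?_
        rw [← Matrix.mul_apply, Matrix.mul_nonsing_inv A hdet, Matrix.one_apply]
    _ = c u i := by simp

lemma repr_full (A : Matrix (Fin l) (Fin l) F) (hA : IsUnit A)
    (x : Fin l × Fin n → F) (j : Fin l) (i : Fin n) :
    x (j, i) = ∑ u, A u j * ∑ k, A⁻¹ k u * x (k, i) := by
  have hdet : IsUnit A.det := (Matrix.isUnit_iff_isUnit_det A).mp hA
  calc x (j, i) = ∑ k, (if k = j then 1 else 0) * x (k, i) := by simp
    _ = ∑ k, (∑ u, A⁻¹ k u * A u j) * x (k, i) := by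
        refine Finset.sum_congr rfl fun k _ => ?_
        rw [← Matrix.mul_apply, Matrix.nonsing_inv_mul A hdet, Matrix.one_apply]
    _ = ∑ u, A u j * ∑ k, A⁻¹ k u * x (k, i) := by
        simp_rw [Finset.sum_mul, Finset.mul_sum]
        rw [Finset.sum_comm]
        exact Finset.sum_congr rfl fun u _ => Finset.sum_congr rfl fun k _ => by ring

lemma mem_mpc_iff (C : Fin l → Submodule F (Fin n → F)) (A : Matrix (Fin l) (Fin l) F)
    (hA : IsUnit A) (x : Fin l × Fin n → F) :
    x ∈ matrixProductCode C A ↔ ∀ u, (fun i => ∑ j, A⁻¹ j u * x (j, i)) ∈ C u := by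
  constructor
  · rintro ⟨c, hc, hx⟩ u
    rw [repr_eq C A hA hx u]
    exact hc u
  · intro h
    exact ⟨fun u i => ∑ j, A⁻¹ j u * x (j, i), h, fun j i => repr_full A hA x j i⟩

lemma mpc_inf (C C' : Fin l → Submodule F (Fin n → F)) (A : Matrix (Fin l) (Fin l) F)
    (hA : IsUnit A) :
    matrixProductCode C A ⊓ matrixProductCode C' A
      = matrixProductCode (fun u => C u ⊓ C' u) A := by
  ext x
  simp only [Submodule.mem_inf, mem_mpc_iff _ A hA, forall_and]

lemma sum_pow_p {p : ℕ} [Fact p.Prime] [CharP F p] (s : ℕ) {ι : Type*} [Fintype ι]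
    (g : ι → F) : (∑ v, g v) ^ p ^ s = ∑ v, g v ^ p ^ s := by
  simpa only [iterateFrobenius_def] using map_sum (iterateFrobenius F p s) g Finset.univ

lemma pairing_eq {p s : ℕ} [Fact p.Prime] [CharP F p]
    (A : Matrix (Fin l) (Fin l) F) (lam : Fin l → F)
    (key : ∀ u v, ∑ j, A u j * A v j ^ p ^ s = if u = v then lam u ^ p ^ s else 0)
    (e f : Fin l → Fin n → F) :
    ∑ ji : Fin l × Fin n, (∑ u, A u ji.1 * e u ji.2) * (∑ v, A v ji.1 * f v ji.2) ^ p ^ s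
      = ∑ u, lam u ^ p ^ s * ∑ i, e u i * f u i ^ p ^ s := by
  have expand : ∀ (j : Fin l) (i : Fin n),
      (∑ v, A v j * f v i) ^ p ^ s = ∑ v, A v j ^ p ^ s * f v i ^ p ^ s := by
    intro j i
    rw [sum_pow_p]
    exact Finset.sum_congr rfl fun v _ => mul_pow _ _ _
  calc ∑ ji : Fin l × Fin n, (∑ u, A u ji.1 * e u ji.2) * (∑ v, A v ji.1 * f v ji.2) ^ p ^ s
      = ∑ j, ∑ i, ∑ u, ∑ v, (A u j * e u i) * (A v j ^ p ^ s * f v i ^ p ^ s) := by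
        rw [Fintype.sum_prod_type]
        refine Finset.sum_congr rfl fun j _ => Finset.sum_congr rfl fun i _ => ?_
        rw [expand j i, Finset.sum_mul_sum]
    _ = ∑ j, ∑ u, ∑ i, ∑ v, (A u j * e u i) * (A v j ^ p ^ s * f v i ^ p ^ s) :=
        Finset.sum_congr rfl fun j _ => Finset.sum_comm
    _ = ∑ u, ∑ j, ∑ i, ∑ v, (A u j * e u i) * (A v j ^ p ^ s * f v i ^ p ^ s) :=
        Finset.sum_comm
    _ = ∑ u, ∑ j, ∑ v, ∑ i, (A u j * e u i) * (A v j ^ p ^ s * f v i ^ p ^ s) :=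
        Finset.sum_congr rfl fun u _ => Finset.sum_congr rfl fun j _ => Finset.sum_comm
    _ = ∑ u, ∑ v, ∑ j, ∑ i, (A u j * e u i) * (A v j ^ p ^ s * f v i ^ p ^ s) :=
        Finset.sum_congr rfl fun u _ => Finset.sum_comm
    _ = ∑ u, ∑ v, ∑ j, ∑ i, (A u j * A v j ^ p ^ s) * (e u i * f v i ^ p ^ s) :=
        Finset.sum_congr rfl fun u _ => Finset.sum_congr rfl fun v _ =>
          Finset.sum_congr rfl fun j _ => Finset.sum_congr rfl fun i _ => by ring
    _ = ∑ u, ∑ v, (∑ j, A u j * A v j ^ p ^ s) * (∑ i, e u i * f v i ^ p ^ s) := by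
        refine Finset.sum_congr rfl fun u _ => Finset.sum_congr rfl fun v _ => ?_
        rw [Finset.sum_mul_sum]
    _ = ∑ u, lam u ^ p ^ s * ∑ i, e u i * f u i ^ p ^ s := by
        refine Finset.sum_congr rfl fun u _ => ?_
        simp_rw [key, ite_mul, zero_mul]
        rw [Finset.sum_ite_eq (Finset.univ : Finset (Fin l)) u]
        simp

end Aux

/-- If `A · (A^{(p^{m-s})})ᵀ = diag(λ_1,…,λ_l)` with all `λ_i ≠ 0`, then
`Hull_s([C_1,…,C_l]A) = [Hull_s(C_1),…,Hull_s(C_l)]A`. -/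
theorem matrixProduct_galois_hull
    {p m s : ℕ} [Fact p.Prime] (hs : s < m)
    {F : Type*} [Field F] [Fintype F] [CharP F p] (hcard : Fintype.card F = p ^ m)
    {n l : ℕ} (C : Fin l → Submodule F (Fin n → F))
    (A : Matrix (Fin l) (Fin l) F) (hA : IsUnit A)
    (lam : Fin l → F) (hlam : ∀ u, lam u ≠ 0)
    (hdiag : A * (A.map fun x => x ^ p ^ (m - s))ᵀ = Matrix.diagonal lam) :
    sGaloisHull p s (matrixProductCode C A) =
      matrixProductCode (fun u => sGaloisHull p s (C u)) A := by
  have hpm : ∀ x : F, x ^ p ^ m = x := fun x => by rw [← hcard]; exact FiniteField.pow_card x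
  have hps : (p : ℕ) ^ s ≠ 0 := pow_ne_zero _ (Nat.Prime.ne_zero Fact.out)
  -- the key orthogonality relation
  have key : ∀ u v, ∑ j, A u j * A v j ^ p ^ s = if u = v then lam u ^ p ^ s else 0 := by
    intro u v
    have h1 : ∑ j, A v j * (A u j) ^ p ^ (m - s) = if v = u then lam v else 0 := by
      have := congrFun (congrFun hdiag v) u
      simpa [Matrix.mul_apply, Matrix.diagonal_apply] using this
    have h2 := congrArg (· ^ p ^ s) h1
    simp only [sum_pow_p, mul_pow, ← pow_mul, ← pow_add] at h2
    have hms : m - s + s = m := Nat.sub_add_cancel hs.le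
    rw [hms] at h2
    simp only [hpm] at h2
    calc ∑ j, A u j * A v j ^ p ^ s = ∑ j, A v j ^ p ^ s * A u j :=
          Finset.sum_congr rfl fun j _ => mul_comm _ _
      _ = (if v = u then lam v else 0) ^ p ^ s := h2
      _ = if u = v then lam u ^ p ^ s else 0 := by
          rw [apply_ite (· ^ p ^ s), zero_pow hps]
          by_cases h : u = v <;> simp [h, eq_comm]
  -- the dual of the matrix product code
  have hdual : sGaloisDual p s (matrixProductCode C A)
      = matrixProductCode (fun u => sGaloisDual p s (C u)) A := by
    ext x
    constructor
    · intro hx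
      set f : Fin l → Fin n → F := fun u i => ∑ j, A⁻¹ j u * x (j, i) with hf
      have hxr : ∀ j i, x (j, i) = ∑ u, A u j * f u i := fun j i => repr_full A hA x j i
      refine ⟨f, fun u => ?_, hxr⟩
      intro d hd
      set e : Fin l → Fin n → F := fun v => if v = u then d else 0 with he
      have hcw : (fun ji : Fin l × Fin n => ∑ v, A v ji.1 * e v ji.2)
          ∈ matrixProductCode C A := by
        refine ⟨e, fun v => ?_, fun j i => rfl⟩
        by_cases h : v = u
        · subst h; simpa [he] using hd
        · simp [he, h]
      have h0 := hx _ hcw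
      have h1 : ∑ ji : Fin l × Fin n, (∑ v, A v ji.1 * e v ji.2) * x ji ^ p ^ s
          = lam u ^ p ^ s * ∑ i, d i * f u i ^ p ^ s := by
        calc ∑ ji : Fin l × Fin n, (∑ v, A v ji.1 * e v ji.2) * x ji ^ p ^ s
            = ∑ ji : Fin l × Fin n, (∑ v, A v ji.1 * e v ji.2)
                * (∑ v, A v ji.1 * f v ji.2) ^ p ^ s := by
              refine Finset.sum_congr rfl fun ji _ => ?_
              rw [show x ji = x (ji.1, ji.2) from rfl, hxr ji.1 ji.2]
          _ = ∑ v, lam v ^ p ^ s * ∑ i, e v i * f v i ^ p ^ s := pairing_eq A lam key e f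
          _ = lam u ^ p ^ s * ∑ i, d i * f u i ^ p ^ s := by
              rw [Finset.sum_eq_single u]
              · simp [he]
              · intro v _ hv; simp [he, hv]
              · simp
      rw [h1] at h0
      have hlu : lam u ^ p ^ s ≠ 0 := pow_ne_zero _ (hlam u)
      exact (mul_eq_zero.mp h0).resolve_left hlu
    · rintro ⟨f, hf, hxr⟩ c ⟨e, he, hc⟩
      calc ∑ ji : Fin l × Fin n, c ji * x ji ^ p ^ s
          = ∑ ji : Fin l × Fin n, (∑ u, A u ji.1 * e u ji.2)
              * (∑ v, A v ji.1 * f v ji.2) ^ p ^ s := by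
            refine Finset.sum_congr rfl fun ji _ => ?_
            rw [show c ji = c (ji.1, ji.2) from rfl, show x ji = x (ji.1, ji.2) from rfl,
              hc ji.1 ji.2, hxr ji.1 ji.2]
        _ = ∑ u, lam u ^ p ^ s * ∑ i, e u i * f u i ^ p ^ s := pairing_eq A lam key e f
        _ = 0 := by
            refine Finset.sum_eq_zero fun u _ => ?_
            rw [hf u (e u) (he u), mul_zero]
  calc sGaloisHull p s (matrixProductCode C A)
      = matrixProductCode C A ⊓ sGaloisDual p s (matrixProductCode C A) := rfl
    _ = matrixProductCode C A ⊓ matrixProductCode (fun u => sGaloisDual p s (C u)) A := by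
        rw [hdual]
    _ = matrixProductCode (fun u => C u ⊓ sGaloisDual p s (C u)) A := mpc_inf _ _ A hA
    _ = matrixProductCode (fun u => sGaloisHull p s (C u)) A := rfl

end
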